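/- Let ℒ and C be N×N real matrices satisfying C² = I and C ℒ C = 2I − ℒ. Let h⁰, h¹, g⁰, g¹ be real polynomials satisfying, as polynomial identities, g⁰(X)·h⁰(X) + g¹(X)·h¹(X) = 2 and g⁰(X)·h⁰(2 − X) − g¹(X)·h¹(2 − X) = 0, where h(2 − X) denotes the composition of h with the polynomial 2 − X. Then the two-channel filter bank achieves perfect reconstruction: ½ g⁰(ℒ)(I − C) h⁰(ℒ) + ½ g¹(ℒ)(I + C) h¹(ℒ) = I. -/
import Mathlib

open Matrix Polynomial

lemma myConjPow {N : ℕ} (L C : Matrix (Fin N) (Fin N) ℝ) (hC : C * C = 1) (k : ℕ) :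
    (C * L * C) ^ k = C * L ^ k * C := by
  induction k with
  | zero => simp [hC]
  | succ n ih =>
      rw [pow_succ, ih, pow_succ]
      calc C * L ^ n * C * (C * L * C) = C * L ^ n * (C * C) * L * C := by noncomm_ring
        _ = C * (L ^ n * L) * C := by rw [hC]; noncomm_ring

lemma aeval_conj' {N : ℕ} (L C : Matrix (Fin N) (Fin N) ℝ) (hC : C * C = 1)
    (p : Polynomial ℝ) : aeval (C * L * C) p = C * aeval L p * C := by
  induction p using Polynomial.induction_on' with
  | add a b ha hb => simp [ha, hb, Matrix.mul_add, Matrix.add_mul]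
  | monomial n a =>
      simp only [aeval_monomial, Algebra.algebraMap_eq_smul_one, smul_mul_assoc, one_mul]
      rw [myConjPow L C hC, Matrix.mul_smul, Matrix.smul_mul]

/-- Perfect reconstruction of a two-channel graph filter bank on a bipartite graph:
if `C² = I`, the spectral folding identity `C ℒ C = 2I − ℒ` holds, and the analysis and
synthesis kernels satisfy `g⁰ h⁰ + g¹ h¹ = 2` and
`g⁰(X) h⁰(2 − X) − g¹(X) h¹(2 − X) = 0` as polynomial identities, then
`½ g⁰(ℒ)(I − C) h⁰(ℒ) + ½ g¹(ℒ)(I + C) h¹(ℒ) = I`. -/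
theorem two_channel_filter_bank_perfect_reconstruction
    {N : ℕ}
    (L C : Matrix (Fin N) (Fin N) ℝ)
    (hC : C * C = 1)
    (hfold : C * L * C = 2 • (1 : Matrix (Fin N) (Fin N) ℝ) - L)
    (h0 h1 g0 g1 : Polynomial ℝ)
    (hpr : g0 * h0 + g1 * h1 = 2)
    (haa : g0 * (h0.comp (2 - Polynomial.X)) - g1 * (h1.comp (2 - Polynomial.X)) = 0) :
    (1 / 2 : ℝ) • (Polynomial.aeval L g0 * (1 - C) * Polynomial.aeval L h0) +
      (1 / 2 : ℝ) • (Polynomial.aeval L g1 * (1 + C) * Polynomial.aeval L h1) = 1 := by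
  have key : ∀ p : Polynomial ℝ, C * aeval L p = aeval L (p.comp (2 - Polynomial.X)) * C := by
    intro p
    have heval : aeval L ((2 : Polynomial ℝ) - Polynomial.X) = C * L * C := by
      rw [hfold, map_sub, aeval_X, nsmul_eq_mul, Nat.cast_ofNat, mul_one, map_ofNat]
    rw [aeval_comp, heval, aeval_conj' L C hC, mul_assoc (C * aeval L p), hC, mul_one]
  have e0 := key h0
  have e1 := key h1
  have hsum : aeval L g0 * aeval L h0 + aeval L g1 * aeval L h1 = 2 • 1 := by
    rw [← _root_.map_mul, ← _root_.map_mul, ← map_add, hpr]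
    rw [nsmul_eq_mul, Nat.cast_ofNat, mul_one, map_ofNat]
  have hdiff : aeval L g0 * aeval L (h0.comp (2 - Polynomial.X))
      - aeval L g1 * aeval L (h1.comp (2 - Polynomial.X)) = 0 := by
    rw [← _root_.map_mul, ← _root_.map_mul, ← map_sub, haa, map_zero]
  have t0 : aeval L g0 * (1 - C) * aeval L h0
      = aeval L g0 * aeval L h0 - aeval L g0 * (C * aeval L h0) := by noncomm_ring
  have t1 : aeval L g1 * (1 + C) * aeval L h1
      = aeval L g1 * aeval L h1 + aeval L g1 * (C * aeval L h1) := by noncomm_ring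
  rw [t0, t1, e0, e1, ← smul_add]
  have inner : aeval L g0 * aeval L h0 - aeval L g0 * (aeval L (h0.comp (2 - Polynomial.X)) * C)
      + (aeval L g1 * aeval L h1 + aeval L g1 * (aeval L (h1.comp (2 - Polynomial.X)) * C))
      = (aeval L g0 * aeval L h0 + aeval L g1 * aeval L h1)
        - (aeval L g0 * aeval L (h0.comp (2 - Polynomial.X))
          - aeval L g1 * aeval L (h1.comp (2 - Polynomial.X))) * C := by noncomm_ring
  rw [inner, hdiff, Matrix.zero_mul, sub_zero, hsum]
  have h2 : (2 : ℕ) • (1 : Matrix (Fin N) (Fin N) ℝ) = (2 : ℝ) • 1 := by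
    simp [two_smul]
  rw [h2, smul_smul]
  norm_num
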